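/- (Most reliable path is solved by the generalized Bellman–Ford algorithm with ⊕ = max, ⊗ = ×.) For every natural number t and all vertices u, v : V, the (max, ×) Bellman–Ford iterate equals the supremum over all walks of length at most t of the product of edge probabilities along the walk: R_t u v = ⨆_{k ∈ Finset.range (t+1)} ⨆ over all walks p of length k from u to v of ∏_{i=0}^{k-1} w (p i) (p (i+1)) (the empty product for k = 0 is 1, and the supremum over an empty set of walks is 0). -/

import Mathlib

open ENNReal

/-- The (max, ×) generalized Bellman–Ford iterates for most reliable path:
`R 0 u v = if u = v then 1 else 0` and
`R (t+1) u v = max (⨆ x, R t u x * w x v) (R 0 u v)`. -/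
noncomputable def maxProdBF {V : Type*} [Fintype V] [DecidableEq V]
    (w : Matrix V V ℝ≥0∞) : ℕ → V → V → ℝ≥0∞
  | 0 => fun u v => if u = v then 1 else 0
  | t + 1 => fun u v =>
      max (⨆ x : V, maxProdBF w t u x * w x v) (if u = v then 1 else 0)

section Aux

variable {V : Type*} [Fintype V] [DecidableEq V] (w : Matrix V V ℝ≥0∞)

/-- Sup over walks of length exactly `k` from `u` to `v` of the product of weights. -/
noncomputable def Wk (k : ℕ) (u v : V) : ℝ≥0∞ :=
  ⨆ p : {p : Fin (k + 1) → V // p 0 = u ∧ p (Fin.last k) = v},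
    ∏ i : Fin k, w (p.1 i.castSucc) (p.1 i.succ)

lemma Wk_zero (u v : V) : Wk w 0 u v = if u = v then 1 else 0 := by
  unfold Wk
  split_ifs with h
  · subst h
    apply le_antisymm
    · exact iSup_le fun p => by simp
    · exact le_iSup_of_le ⟨fun _ => u, rfl, rfl⟩ (by simp)
  · haveI : IsEmpty {p : Fin 1 → V // p 0 = u ∧ p (Fin.last 0) = v} :=
      ⟨fun p => h (p.2.1.symm.trans p.2.2)⟩
    simp
    exact fun a h1 h2 => h (h1.symm.trans h2)

lemma Wk_succ (k : ℕ) (u v : V) :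
    Wk w (k + 1) u v = ⨆ x : V, Wk w k u x * w x v := by
  unfold Wk
  apply le_antisymm
  · refine iSup_le fun p => ?_
    obtain ⟨p, h0, hl⟩ := p
    dsimp only
    rw [Fin.prod_univ_castSucc]
    refine le_iSup_of_le (p (Fin.last k).castSucc) ?_
    have hv : p (Fin.last k).succ = v := by rwa [Fin.succ_last]
    rw [hv]
    refine mul_le_mul_left ?_ _
    refine le_iSup_of_le ⟨fun i => p i.castSucc, by simpa using h0, rfl⟩ ?_
    apply le_of_eq
    refine Finset.prod_congr rfl fun i _ => ?_
    simp [Fin.succ_castSucc, -Fin.castSucc_succ]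
  · refine iSup_le fun x => ?_
    rw [ENNReal.iSup_mul]
    refine iSup_le fun q => ?_
    refine le_iSup_of_le ⟨Fin.snoc q.1 v, ?_, Fin.snoc_last _ _⟩ ?_
    · exact (Fin.snoc_castSucc (α := fun _ => V) ..).trans q.2.1
    · apply le_of_eq
      dsimp only
      rw [Fin.prod_univ_castSucc]
      congr 1
      · refine Finset.prod_congr rfl fun i _ => ?_
        rw [Fin.succ_castSucc, Fin.snoc_castSucc, Fin.snoc_castSucc]
      · rw [Fin.snoc_castSucc, Fin.succ_last, Fin.snoc_last, q.2.2]

lemma maxProdBF_eq_Wk (t : ℕ) (u v : V) :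
    maxProdBF w t u v = ⨆ k ∈ Finset.range (t + 1), Wk w k u v := by
  induction t generalizing v with
  | zero =>
    simp [maxProdBF, Wk_zero]
  | succ t ih =>
    show max (⨆ x : V, maxProdBF w t u x * w x v) (if u = v then 1 else 0) = _
    simp_rw [ih]
    have h1 : (⨆ x : V, (⨆ k ∈ Finset.range (t + 1), Wk w k u x) * w x v)
        = ⨆ k ∈ Finset.range (t + 1), Wk w (k + 1) u v := by
      simp_rw [ENNReal.iSup_mul]
      rw [iSup_comm]
      refine iSup_congr fun k => ?_
      rw [iSup_comm]
      exact iSup_congr fun _ => (Wk_succ w k u v).symm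
    rw [h1, ← Wk_zero w u v]
    apply le_antisymm
    · apply max_le
      · refine iSup₂_le fun k hk => ?_
        refine le_iSup₂_of_le (k + 1) ?_ le_rfl
        simp only [Finset.mem_range] at hk ⊢; omega
      · exact le_iSup₂_of_le 0 (by simp) le_rfl
    · refine iSup₂_le fun k hk => ?_
      match k with
      | 0 => exact le_max_of_le_right le_rfl
      | k + 1 =>
        refine le_max_of_le_left ?_
        refine le_iSup₂_of_le k ?_ le_rfl
        simp only [Finset.mem_range] at hk ⊢; omega

end Aux

theorem maxProdBF_eq_sup_over_short_walks {V : Type*} [Fintype V] [DecidableEq V]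
    (w : Matrix V V ℝ≥0∞) (hw : ∀ x y : V, w x y ≤ 1) (t : ℕ) (u v : V) :
    maxProdBF w t u v =
      ⨆ k ∈ Finset.range (t + 1),
        ⨆ p : {p : Fin (k + 1) → V // p 0 = u ∧ p (Fin.last k) = v},
          ∏ i : Fin k, w (p.1 i.castSucc) (p.1 i.succ) := by
  exact maxProdBF_eq_Wk w t u v
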